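/- Let s be a positive integer and x a real number with x ≥ 1. Then ∫_{x}^{+∞} t^{s−1} e^{−t} dt ≤ s! · x^{s−1} · e^{−x}. -/

import Mathlib

open MeasureTheory Set Real

lemma romG_integrable (n : ℕ) {x : ℝ} (hx : 0 < x) :
    IntegrableOn (fun t : ℝ => t ^ n * Real.exp (-t)) (Set.Ioi x) := by
  have h := Real.GammaIntegral_convergent (s := (n + 1 : ℝ)) (by positivity)
  have h2 : IntegrableOn (fun t : ℝ => t ^ n * Real.exp (-t)) (Set.Ioi 0) := by
    refine h.congr_fun (fun t ht => ?_) measurableSet_Ioi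
    rw [add_sub_cancel_right]; dsimp only; rw [Real.rpow_natCast, mul_comm]
  exact h2.mono_set (Ioi_subset_Ioi hx.le)

lemma romG_ibp (n : ℕ) {x : ℝ} (hx : 0 < x) :
    ∫ t in Set.Ioi x, t ^ (n+1) * Real.exp (-t)
      = x ^ (n+1) * Real.exp (-x) + (n+1) * ∫ t in Set.Ioi x, t ^ n * Real.exp (-t) := by
  have hderiv : ∀ t ∈ Set.Ici x, HasDerivAt (fun t : ℝ => -(t ^ (n+1) * Real.exp (-t)))
      (t ^ (n+1) * Real.exp (-t) - (n+1) * (t ^ n * Real.exp (-t))) t := by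
    intro t _
    have h1 : HasDerivAt (fun t : ℝ => t ^ (n+1)) ((n+1) * t ^ n) t := by
      simpa using (hasDerivAt_pow (n+1) t)
    have h2 : HasDerivAt (fun t : ℝ => Real.exp (-t)) (-Real.exp (-t)) t := by
      simpa using (hasDerivAt_neg t).exp
    have : HasDerivAt (fun t : ℝ => -(t ^ (n+1) * Real.exp (-t)))
        (-((n+1) * t ^ n * Real.exp (-t) + t ^ (n+1) * -Real.exp (-t))) t := (h1.mul h2).neg
    convert this using 1
    ring
  have hint : IntegrableOn (fun t : ℝ => t ^ (n+1) * Real.exp (-t) - (n+1) * (t ^ n * Real.exp (-t))) (Set.Ioi x) :=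
    (romG_integrable (n+1) hx).sub ((romG_integrable n hx).const_mul _)
  have htend : Filter.Tendsto (fun t : ℝ => -(t ^ (n+1) * Real.exp (-t))) Filter.atTop (nhds 0) := by
    simpa using (tendsto_pow_mul_exp_neg_atTop_nhds_zero (n+1)).neg
  have key := integral_Ioi_of_hasDerivAt_of_tendsto' hderiv hint htend
  rw [integral_sub (romG_integrable (n+1) hx) ((romG_integrable n hx).const_mul _),
    integral_const_mul] at key
  linarith [key]

lemma romG_aux (n : ℕ) {x : ℝ} (hx : 1 ≤ x) :
    ∫ t in Set.Ioi x, t ^ n * Real.exp (-t)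
      ≤ (Nat.factorial (n+1) : ℝ) * x ^ n * Real.exp (-x) := by
  have hx0 : 0 < x := lt_of_lt_of_le one_pos hx
  induction n with
  | zero =>
    simp only [pow_zero, one_mul, integral_exp_neg_Ioi]
    norm_num
  | succ n ih =>
    rw [romG_ibp n hx0]
    have hxp : x ^ n ≤ x ^ (n+1) := pow_le_pow_right₀ hx (by omega)
    have h1 : (n+1 : ℝ) * ∫ t in Set.Ioi x, t ^ n * Real.exp (-t)
        ≤ (n+1 : ℝ) * ((Nat.factorial (n+1) : ℝ) * x ^ n * Real.exp (-x)) := by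
      exact mul_le_mul_of_nonneg_left ih (by positivity)
    have h2 : (n+1 : ℝ) * ((Nat.factorial (n+1) : ℝ) * x ^ n * Real.exp (-x))
        ≤ (n+1 : ℝ) * (Nat.factorial (n+1) : ℝ) * x ^ (n+1) * Real.exp (-x) := by
      have := mul_le_mul_of_nonneg_left hxp (by positivity : (0:ℝ) ≤ (n+1) * (Nat.factorial (n+1)))
      nlinarith [Real.exp_pos (-x)]
    have hfac : (1 : ℝ) + (n+1) * (Nat.factorial (n+1)) ≤ (Nat.factorial (n+2) : ℝ) := by
      have : Nat.factorial (n+2) = (n+2) * Nat.factorial (n+1) := rfl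
      rw [this]
      push_cast
      nlinarith [Nat.one_le_iff_ne_zero.mpr (Nat.factorial_ne_zero (n+1)),
        (by exact_mod_cast Nat.one_le_iff_ne_zero.mpr (Nat.factorial_ne_zero (n+1)) : (1:ℝ) ≤ Nat.factorial (n+1))]
    have h3 := mul_le_mul_of_nonneg_right hfac
      (by positivity : (0:ℝ) ≤ x ^ (n+1) * Real.exp (-x))
    have : ((n+1+1).factorial : ℝ) = ((n+2).factorial : ℝ) := by norm_num
    nlinarith [h1, h2, h3]

/-- Lemma on the incomplete Gamma function. For a positive integer
`s` and a real `x ≥ 1`, `∫_x^∞ t^(s-1) e^(-t) dt ≤ s! x^(s-1) e^(-x)`. -/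
theorem romanoff_Gamma (s : ℕ) (hs : 0 < s) (x : ℝ) (hx : 1 ≤ x) :
    ∫ t in Set.Ioi x, t ^ (s - 1) * Real.exp (-t) ≤
      (Nat.factorial s : ℝ) * x ^ (s - 1) * Real.exp (-x) := by
  obtain ⟨n, rfl⟩ : ∃ n, s = n + 1 := ⟨s - 1, by omega⟩
  simpa using romG_aux n hx
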